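/- Consider the DAGs G₁: 1 → 3 → 2 and G₂: 2 → 3 → 1 on vertex set {1,2,3}, and the partition Π = {{1,2},{3}}. Then M_{G₁,Π} = { Σ positive definite : σ₁₁σ₃₃ = σ₂₂σ₃₃ − σ₂₃², σ₁₃σ₂₃ − σ₁₂σ₃₃ = 0 }, where Σ = (σ_{ij}). -/

import Mathlib

open Matrix

/-- The partially homoscedastic linear Gaussian model `M_{G,Π}`. -/
def PHModel {V : Type*} [Fintype V] [DecidableEq V]
    (E : V → V → Prop) (r : V → V → Prop) : Set (Matrix V V ℝ) :=
  {C | ∃ (Λ : Matrix V V ℝ) (ω : V → ℝ),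
    (∀ a b, ¬ E a b → Λ a b = 0) ∧ (∀ a, 0 < ω a) ∧
    (∀ a b, r a b → ω a = ω b) ∧
    C = ((1 - Λ)ᵀ)⁻¹ * Matrix.diagonal ω * (1 - Λ)⁻¹}

lemma posdef_conj {n : Type*} [Fintype n] [DecidableEq n] {D : Matrix n n ℝ}
    (N : Matrix n n ℝ) (hD : D.PosDef) (hN : IsUnit N) : (Nᵀ * D * N).PosDef := by
  rw [Matrix.posDef_iff_dotProduct_mulVec]
  constructor
  · have := Matrix.isHermitian_conjTranspose_mul_mul N hD.1
    simpa [Matrix.conjTranspose_eq_transpose_of_trivial] using this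
  · intro x hx
    have hinj : Function.Injective (N.mulVec) := Matrix.mulVec_injective_iff_isUnit.mpr hN
    have hx' : N *ᵥ x ≠ 0 := fun h => hx (hinj (by simpa using h))
    have := hD.dotProduct_mulVec_pos (x := N *ᵥ x) hx'
    have hrw : star x ⬝ᵥ (Nᵀ * D * N) *ᵥ x = star (N *ᵥ x) ⬝ᵥ D *ᵥ (N *ᵥ x) := by
      simp only [star_trivial, ← Matrix.mulVec_mulVec, dotProduct_mulVec,
        Matrix.vecMul_transpose]
    rwa [hrw]

lemma conj_entry {n : Type*} [Fintype n] [DecidableEq n] (N : Matrix n n ℝ) (ω : n → ℝ)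
    (i j : n) : (Nᵀ * Matrix.diagonal ω * N) i j = ∑ k, ω k * (N k i * N k j) := by
  rw [Matrix.mul_apply]
  simp only [Matrix.mul_diagonal, Matrix.transpose_apply]
  apply Finset.sum_congr rfl
  intros
  ring

lemma inv_N (a b : ℝ) (Λ : Matrix (Fin 3) (Fin 3) ℝ)
    (hM : (1 : Matrix (Fin 3) (Fin 3) ℝ) - Λ = !![1,0,-a; 0,1,0; 0,-b,1]) :
    ((1 : Matrix (Fin 3) (Fin 3) ℝ) - Λ)⁻¹ = !![1,a*b,a; 0,1,0; 0,b,1] := by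
  apply Matrix.inv_eq_right_inv
  rw [hM]
  ext i j
  fin_cases i <;> fin_cases j <;>
    simp [Matrix.mul_apply, Fin.sum_univ_three, Matrix.one_apply,
      Matrix.vecHead, Matrix.vecTail] <;> ring

theorem stmt15 :
    PHModel (fun a b : Fin 3 => (a = 0 ∧ b = 2) ∨ (a = 2 ∧ b = 1))
        (fun a b => a = b ∨ (a = 0 ∧ b = 1) ∨ (a = 1 ∧ b = 0)) =
      {C : Matrix (Fin 3) (Fin 3) ℝ | C.PosDef ∧
        C 0 0 * C 2 2 = C 1 1 * C 2 2 - (C 1 2) ^ 2 ∧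
        C 0 2 * C 1 2 - C 0 1 * C 2 2 = 0} := by
  ext C
  constructor
  · rintro ⟨Λ, ω, hΛ, hω, hr, hC⟩
    have hM : (1 : Matrix (Fin 3) (Fin 3) ℝ) - Λ = !![1,0,-(Λ 0 2); 0,1,0; 0,-(Λ 2 1),1] := by
      ext i j
      fin_cases i <;> fin_cases j <;>
        simp [hΛ 0 0 (by simp), hΛ 0 1 (by simp), hΛ 1 0 (by simp), hΛ 1 1 (by simp),
          hΛ 1 2 (by simp), hΛ 2 0 (by simp), hΛ 2 2 (by simp), Matrix.one_apply,
          Matrix.vecHead, Matrix.vecTail]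
    have hinv := inv_N (Λ 0 2) (Λ 2 1) Λ hM
    have hC' : C = (!![1,(Λ 0 2)*(Λ 2 1),(Λ 0 2); 0,1,0; 0,(Λ 2 1),1])ᵀ *
        Matrix.diagonal ω * !![1,(Λ 0 2)*(Λ 2 1),(Λ 0 2); 0,1,0; 0,(Λ 2 1),1] := by
      rw [hC, ← Matrix.transpose_nonsing_inv, hinv]
    have hNunit : IsUnit (!![1,(Λ 0 2)*(Λ 2 1),(Λ 0 2); 0,1,0; 0,(Λ 2 1),1] :
        Matrix (Fin 3) (Fin 3) ℝ) := by
      rw [Matrix.isUnit_iff_isUnit_det]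
      have : (!![1,(Λ 0 2)*(Λ 2 1),(Λ 0 2); 0,1,0; 0,(Λ 2 1),1] :
          Matrix (Fin 3) (Fin 3) ℝ).det = 1 := by
        rw [Matrix.det_fin_three]
        simp [Matrix.vecHead, Matrix.vecTail]
      simp [this]
    have hDpd : (Matrix.diagonal ω).PosDef := Matrix.PosDef.diagonal hω
    have hPD : C.PosDef := by rw [hC']; exact posdef_conj _ hDpd hNunit
    have hω01 : ω 1 = ω 0 := (hr 0 1 (by tauto)).symm
    have e : ∀ i j, C i j = ∑ k, ω k *
        (!![1,(Λ 0 2)*(Λ 2 1),(Λ 0 2); 0,1,0; 0,(Λ 2 1),1] k i *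
         !![1,(Λ 0 2)*(Λ 2 1),(Λ 0 2); 0,1,0; 0,(Λ 2 1),1] k j) := by
      intro i j
      rw [hC', conj_entry]
    refine ⟨hPD, ?_, ?_⟩
    · rw [e 0 0, e 2 2, e 1 1, e 1 2]
      simp [Fin.sum_univ_three, hω01, Matrix.vecHead, Matrix.vecTail]
      ring
    · rw [e 0 2, e 1 2, e 0 1, e 2 2]
      simp [Fin.sum_univ_three, Matrix.vecHead, Matrix.vecTail]
      ring
  · rintro ⟨hPD, h1, h2⟩
    have hsym : ∀ i j, C i j = C j i := by
      intro i j
      have := congrFun (congrFun hPD.1 i) j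
      simpa [Matrix.conjTranspose_apply] using this.symm
    have hdiag : ∀ i, 0 < C i i := by
      intro i
      have := hPD.dotProduct_mulVec_pos (x := Pi.single i 1) (by simp [Function.ne_iff])
      simpa [dotProduct, Matrix.mulVec, Pi.single_apply] using this
    have hw : 0 < C 0 0 := hdiag 0
    have h22 : 0 < C 2 2 := hdiag 2
    have h00' : C 0 0 ≠ 0 := hw.ne'
    have h22' : C 2 2 ≠ 0 := h22.ne'
    have hminor : 0 < C 0 0 * C 2 2 - (C 0 2)^2 := by
      have hxne : (![C 0 2, 0, -(C 0 0)] : Fin 3 → ℝ) ≠ 0 := by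
        intro h
        have := congrFun h 2
        simp at this
        exact hw.ne' this
      have h := hPD.dotProduct_mulVec_pos hxne
      have hq : star (![C 0 2, 0, -(C 0 0)] : Fin 3 → ℝ) ⬝ᵥ C *ᵥ ![C 0 2, 0, -(C 0 0)]
          = C 0 0 * (C 0 0 * C 2 2 - (C 0 2)^2) := by
        simp [dotProduct, Matrix.mulVec, Fin.sum_univ_three, hsym 2 0,
          Matrix.vecHead, Matrix.vecTail]
        ring
      rw [hq] at h
      nlinarith [hw]
    have hvpos : 0 < C 2 2 - (C 0 2)^2 / C 0 0 := by
      rw [sub_pos, div_lt_iff₀ hw]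
      nlinarith [hminor]
    refine ⟨!![0,0,C 0 2 / C 0 0; 0,0,0; 0,C 1 2 / C 2 2,0],
      ![C 0 0, C 0 0, C 2 2 - (C 0 2)^2 / C 0 0], ?_, ?_, ?_, ?_⟩
    · intro i j h
      fin_cases i <;> fin_cases j <;>
        simp_all [Matrix.vecHead, Matrix.vecTail]
    · intro i
      fin_cases i <;> simp [hw, hvpos]
    · intro i j h
      fin_cases i <;> fin_cases j <;> simp_all
    · have hM : (1 : Matrix (Fin 3) (Fin 3) ℝ) - !![0,0,C 0 2 / C 0 0; 0,0,0; 0,C 1 2 / C 2 2,0]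
          = !![1,0,-(C 0 2 / C 0 0); 0,1,0; 0,-(C 1 2 / C 2 2),1] := by
        ext i j
        fin_cases i <;> fin_cases j <;>
          simp [Matrix.one_apply, Matrix.vecHead, Matrix.vecTail]
      have hinv := inv_N (C 0 2 / C 0 0) (C 1 2 / C 2 2) _ hM
      rw [← Matrix.transpose_nonsing_inv, hinv]
      ext i j
      rw [conj_entry]
      fin_cases i <;> fin_cases j <;>
        simp [Fin.sum_univ_three, Matrix.vecHead, Matrix.vecTail]
      · field_simp
        linear_combination (-1 : ℝ) * h2
      · field_simp
      · field_simp
        linear_combination (-1 : ℝ) * h2 + C 2 2 * hsym 1 0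
      · field_simp
        linear_combination (-(C 0 0 * C 2 2)) * h1
      · field_simp
        ring
      · field_simp
        linear_combination hsym 2 0
      · field_simp
        linear_combination (C 0 0 * C 2 2) * hsym 2 1
      · field_simp
        ring
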